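/- Let F be the skew-product transformation F(ω,x)=(σω,f_{ω_0}(x)) on Σ_m×X associated to continuous maps f_0,…,f_{m−1} of a compact metric space X, and let g(ω,x)=c+φ(x) for a constant c∈ℝ and φ∈C(X,ℝ). Then the classical topological pressure of F with respect to g satisfies P(F,g)=c+log m+P(f_0,…,f_{m−1},φ), where P(f_0,…,f_{m−1},φ) is the topological pressure of the free semigroup action generated by f_0,…,f_{m−1} with respect to φ. -/

import Mathlib

open Filter Topology MeasureTheory Set

namespace FSA

/-- `f_w = f_{w₁} ∘ ⋯ ∘ f_{w_k}` for the word `w = [w₁,…,w_k]`; the empty word acts as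
the identity. -/
def wordMap {X : Type*} {ι : Type*} (f : ι → X → X) : List ι → X → X
  | [] => id
  | a :: t => f a ∘ wordMap f t

/-- `(S_wφ)(x) = Σ_{w'} φ(f_{w'}x)`, summing over the `|w|` words `w'` consisting of the
empty word and the proper suffixes of `w`. -/
noncomputable def birkhoff {X : Type*} {ι : Type*} (f : ι → X → X) (φ : X → ℝ)
    (w : List ι) (x : X) : ℝ :=
  (w.tails.tail.map fun w' => φ (wordMap f w' x)).sum

section Core

variable {X : Type*} {ι : Type*}

/-- Bowen metric `d_w(x,y) = max_{w'≤w} d(f_{w'}x, f_{w'}y)`, the maximum ranging over all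
suffixes of `w` (including `w` itself and the empty word). -/
noncomputable def bowenDist [PseudoMetricSpace X] (f : ι → X → X) (w : List ι) (x y : X) : ℝ :=
  (w.tails.map fun w' => dist (wordMap f w' x) (wordMap f w' y)).foldr max 0

/-- `E` is a `(w,ε)`-spanning set. -/
def IsSpanningSet [PseudoMetricSpace X] (f : ι → X → X) (w : List ι) (ε : ℝ)
    (E : Finset X) : Prop :=
  ∀ x : X, ∃ y ∈ E, bowenDist f w x y < ε

/-- `E` is a `(w,ε)`-separated set. -/
def IsSeparatedSet [PseudoMetricSpace X] (f : ι → X → X) (w : List ι) (ε : ℝ)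
    (E : Finset X) : Prop :=
  ∀ x ∈ E, ∀ y ∈ E, x ≠ y → ε ≤ bowenDist f w x y

/-- `Q_w(φ,ε) = inf { Σ_{x∈E} e^{(S_wφ)(x)} : E a (w,ε)-spanning set }`. -/
noncomputable def Qword [PseudoMetricSpace X] (f : ι → X → X) (φ : X → ℝ) (w : List ι)
    (ε : ℝ) : ℝ :=
  sInf {s : ℝ | ∃ E : Finset X, IsSpanningSet f w ε E ∧
    s = ∑ x ∈ E, Real.exp (birkhoff f φ w x)}

/-- `P_w(φ,ε) = sup { Σ_{x∈E} e^{(S_wφ)(x)} : E a (w,ε)-separated set }`. -/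
noncomputable def Pword [PseudoMetricSpace X] (f : ι → X → X) (φ : X → ℝ) (w : List ι)
    (ε : ℝ) : ℝ :=
  sSup {s : ℝ | ∃ E : Finset X, IsSeparatedSet f w ε E ∧
    s = ∑ x ∈ E, Real.exp (birkhoff f φ w x)}

/-- `Q_n(φ,ε) = m^{-n} Σ_{|w|=n} Q_w(φ,ε)`. -/
noncomputable def Qn [PseudoMetricSpace X] [Fintype ι] (f : ι → X → X) (φ : X → ℝ)
    (n : ℕ) (ε : ℝ) : ℝ :=
  (1 / (Fintype.card ι : ℝ) ^ n) * ∑ w : Fin n → ι, Qword f φ (List.ofFn w) ε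

/-- `P_n(φ,ε) = m^{-n} Σ_{|w|=n} P_w(φ,ε)`. -/
noncomputable def Pn [PseudoMetricSpace X] [Fintype ι] (f : ι → X → X) (φ : X → ℝ)
    (n : ℕ) (ε : ℝ) : ℝ :=
  (1 / (Fintype.card ι : ℝ) ^ n) * ∑ w : Fin n → ι, Pword f φ (List.ofFn w) ε

/-- Topological pressure of the free semigroup action,
`P(f₀,…,f_{m-1},φ) = lim_{ε→0} limsup_{n→∞} (1/n) log Q_n(φ,ε)`.
Since the inner quantity is nonincreasing in `ε`, the limit as `ε → 0⁺` equals the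
supremum over `ε > 0`. -/
noncomputable def pressure [PseudoMetricSpace X] [Fintype ι] (f : ι → X → X) (φ : X → ℝ) :
    EReal :=
  ⨆ (ε : ℝ) (_ : 0 < ε),
    Filter.limsup (fun n : ℕ => (↑(Real.log (Qn f φ n ε) / (n : ℝ)) : EReal)) atTop

end Core

section Sigma

open scoped Classical

/-- The two-sided full shift space `Σ_m` of sequences `(…,ω₋₁,ω₀,ω₁,…)` with entries in
`{0,…,m-1}`. -/
def SigmaSpace (m : ℕ) : Type := ℤ → Fin m

/-- The metric `d(ω,ω') = 2^{-k}`, `k = min {|n| : ωₙ ≠ ω'ₙ}` on `Σ_m`. -/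
noncomputable def sdist (m : ℕ) (ω ω' : SigmaSpace m) : ℝ :=
  if ω = ω' then 0
  else (1 / 2 : ℝ) ^ sInf {k : ℕ | ∃ n : ℤ, n.natAbs = k ∧ ω n ≠ ω' n}

lemma sdist_nonneg (m : ℕ) (ω ω' : SigmaSpace m) : 0 ≤ sdist m ω ω' := by
  unfold sdist
  split
  · exact le_refl 0
  · positivity

lemma sdist_self (m : ℕ) (ω : SigmaSpace m) : sdist m ω ω = 0 := by
  simp [sdist]

lemma sdist_comm (m : ℕ) (ω ω' : SigmaSpace m) : sdist m ω ω' = sdist m ω' ω := by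
  unfold sdist
  by_cases h : ω = ω'
  · simp [h]
  · rw [if_neg h, if_neg (fun h' => h h'.symm)]
    congr 2
    ext k
    exact ⟨fun ⟨n, h1, h2⟩ => ⟨n, h1, h2.symm⟩, fun ⟨n, h1, h2⟩ => ⟨n, h1, h2.symm⟩⟩

lemma sdist_triangle (m : ℕ) (x y z : SigmaSpace m) :
    sdist m x z ≤ sdist m x y + sdist m y z := by
  by_cases hxz : x = z
  · rw [sdist, if_pos hxz]
    exact add_nonneg (sdist_nonneg m x y) (sdist_nonneg m y z)
  · by_cases hxy : x = y
    · subst hxy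
      rw [sdist_self]
      simp
    · by_cases hyz : y = z
      · subst hyz
        rw [sdist_self]
        simp
      · unfold sdist
        rw [if_neg hxz, if_neg hxy, if_neg hyz]
        set S₀ := {k : ℕ | ∃ n : ℤ, n.natAbs = k ∧ x n ≠ z n} with hS₀def
        set S₁ := {k : ℕ | ∃ n : ℤ, n.natAbs = k ∧ x n ≠ y n} with hS₁def
        set S₂ := {k : ℕ | ∃ n : ℤ, n.natAbs = k ∧ y n ≠ z n} with hS₂def
        have hne : S₀.Nonempty := by
          rcases Function.ne_iff.mp hxz with ⟨n, hn⟩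
          exact ⟨n.natAbs, n, rfl, hn⟩
        obtain ⟨n, hn, hnxz⟩ := Nat.sInf_mem hne
        have hcase : x n ≠ y n ∨ y n ≠ z n := by
          by_contra hc
          push_neg at hc
          exact hnxz (hc.1.trans hc.2)
        rcases hcase with h | h
        · have h1 : sInf S₁ ≤ sInf S₀ := Nat.sInf_le ⟨n, hn, h⟩
          have h3 : (1 / 2 : ℝ) ^ sInf S₀ ≤ (1 / 2 : ℝ) ^ sInf S₁ :=
            pow_le_pow_of_le_one (by norm_num) (by norm_num) h1
          have h2 : (0:ℝ) ≤ (1 / 2 : ℝ) ^ sInf S₂ := by positivity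
          linarith
        · have h1 : sInf S₂ ≤ sInf S₀ := Nat.sInf_le ⟨n, hn, h⟩
          have h3 : (1 / 2 : ℝ) ^ sInf S₀ ≤ (1 / 2 : ℝ) ^ sInf S₂ :=
            pow_le_pow_of_le_one (by norm_num) (by norm_num) h1
          have h2 : (0:ℝ) ≤ (1 / 2 : ℝ) ^ sInf S₁ := by positivity
          linarith

lemma eq_of_sdist_eq_zero (m : ℕ) (x y : SigmaSpace m) (h : sdist m x y = 0) : x = y := by
  by_contra hxy
  rw [sdist, if_neg hxy] at h
  have : (0:ℝ) < (1 / 2 : ℝ) ^ sInf {k : ℕ | ∃ n : ℤ, n.natAbs = k ∧ x n ≠ y n} := by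
    positivity
  linarith

noncomputable instance (m : ℕ) : MetricSpace (SigmaSpace m) where
  dist := sdist m
  dist_self := sdist_self m
  dist_comm := sdist_comm m
  dist_triangle := sdist_triangle m
  eq_of_dist_eq_zero := eq_of_sdist_eq_zero m _ _

/-- The Bernoulli shift `(σω)ᵢ = ω_{i+1}` on `Σ_m`. -/
def shift (m : ℕ) : SigmaSpace m → SigmaSpace m := fun ω i => ω (i + 1)

end Sigma

section Aux1

variable {X : Type*} {ι : Type*}

theorem wordMap_nil (f : ι → X → X) (x : X) : wordMap f [] x = x := rfl

theorem wordMap_cons (f : ι → X → X) (a : ι) (t : List ι) (x : X) :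
    wordMap f (a :: t) x = f a (wordMap f t x) := rfl

theorem birkhoff_nil (f : ι → X → X) (φ : X → ℝ) (x : X) : birkhoff f φ [] x = 0 := by
  simp [birkhoff]

theorem tails_eq_cons (t : List ι) : t.tails = t :: t.tails.tail := by
  cases t <;> simp

theorem birkhoff_cons (f : ι → X → X) (φ : X → ℝ) (a : ι) (t : List ι) (x : X) :
    birkhoff f φ (a :: t) x = φ (wordMap f t x) + birkhoff f φ t x := by
  unfold birkhoff
  rw [List.tails_cons, List.tail_cons, tails_eq_cons t]
  simp

theorem bowenDist_nil [PseudoMetricSpace X] (f : ι → X → X) (x y : X) :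
    bowenDist f [] x y = dist x y := by
  simp [bowenDist, wordMap_nil]

theorem bowenDist_cons [PseudoMetricSpace X] (f : ι → X → X) (a : ι) (t : List ι) (x y : X) :
    bowenDist f (a :: t) x y =
      max (dist (wordMap f (a :: t) x) (wordMap f (a :: t) y)) (bowenDist f t x y) := by
  simp [bowenDist, List.tails_cons]

theorem bowenDist_nonneg [PseudoMetricSpace X] (f : ι → X → X) (w : List ι) (x y : X) :
    0 ≤ bowenDist f w x y := by
  induction w with
  | nil => rw [bowenDist_nil]; exact dist_nonneg
  | cons a t ih => rw [bowenDist_cons]; exact le_max_of_le_right ih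

theorem bowenDist_self [PseudoMetricSpace X] (f : ι → X → X) (w : List ι) (x : X) :
    bowenDist f w x x = 0 := by
  induction w with
  | nil => simp [bowenDist_nil]
  | cons a t ih => simp [bowenDist_cons, ih]

theorem dist_le_bowenDist [PseudoMetricSpace X] (f : ι → X → X) {w s : List ι}
    (hs : s <:+ w) (x y : X) :
    dist (wordMap f s x) (wordMap f s y) ≤ bowenDist f w x y := by
  induction w with
  | nil =>
    rw [List.suffix_nil] at hs
    subst hs
    rw [bowenDist_nil]
    rfl
  | cons a t ih =>
    rw [bowenDist_cons]
    rcases List.suffix_cons_iff.1 hs with h | h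
    · subst h; exact le_max_left _ _
    · exact le_max_of_le_right (ih h)

theorem bowenDist_lt_iff [PseudoMetricSpace X] (f : ι → X → X) {ε : ℝ} (hε : 0 < ε)
    (w : List ι) (x y : X) :
    bowenDist f w x y < ε ↔ ∀ s, s <:+ w → dist (wordMap f s x) (wordMap f s y) < ε := by
  constructor
  · exact fun h s hs => (dist_le_bowenDist f hs x y).trans_lt h
  · intro h
    induction w with
    | nil => rw [bowenDist_nil]; exact h [] List.suffix_rfl
    | cons a t ih =>
      rw [bowenDist_cons]
      exact max_lt (h _ List.suffix_rfl) (ih fun s hs => h s (hs.trans (List.suffix_cons a t)))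

theorem continuous_wordMap [TopologicalSpace X] {f : ι → X → X} (hf : ∀ i, Continuous (f i))
    (w : List ι) : Continuous (wordMap f w) := by
  induction w with
  | nil => exact continuous_id
  | cons a t ih => exact (hf a).comp ih

theorem continuous_bowenDist [PseudoMetricSpace X] {f : ι → X → X} (hf : ∀ i, Continuous (f i))
    (w : List ι) (y : X) : Continuous fun x => bowenDist f w x y := by
  induction w with
  | nil =>
    simp only [bowenDist_nil]
    exact continuous_id.dist continuous_const
  | cons a t ih =>
    simp only [bowenDist_cons]
    exact ((continuous_wordMap hf (a :: t)).dist continuous_const).max ih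

theorem exists_spanningSet [MetricSpace X] [CompactSpace X] {f : ι → X → X}
    (hf : ∀ i, Continuous (f i)) (w : List ι) {ε : ℝ} (hε : 0 < ε) :
    ∃ E : Finset X, IsSpanningSet f w ε E := by
  obtain ⟨t, ht⟩ := IsCompact.elim_finite_subcover (isCompact_univ (X := X))
    (fun y : X => {x | bowenDist f w x y < ε})
    (fun y => isOpen_lt (continuous_bowenDist hf w y) continuous_const)
    (fun x _ => Set.mem_iUnion.2 ⟨x, by simp [bowenDist_self f w x, hε]⟩)
  refine ⟨t, fun x => ?_⟩
  have := ht (Set.mem_univ x)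
  simp only [Set.mem_iUnion, Set.mem_setOf_eq] at this
  obtain ⟨y, hy, hxy⟩ := this
  exact ⟨y, hy, hxy⟩

theorem spanningSet_nonempty [PseudoMetricSpace X] [Nonempty X] {f : ι → X → X} {w : List ι}
    {ε : ℝ} {E : Finset X} (hE : IsSpanningSet f w ε E) : E.Nonempty := by
  obtain ⟨y, hy, -⟩ := hE (Classical.arbitrary X)
  exact ⟨y, hy⟩

theorem birkhoff_abs_le [PseudoMetricSpace X] (f : ι → X → X) {φ : X → ℝ} {C : ℝ}
    (hC : ∀ x, |φ x| ≤ C) (w : List ι) (x : X) :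
    |birkhoff f φ w x| ≤ w.length * C := by
  induction w with
  | nil => simp [birkhoff_nil]
  | cons a t ih =>
    rw [birkhoff_cons]
    calc |φ (wordMap f t x) + birkhoff f φ t x| ≤ |φ (wordMap f t x)| + |birkhoff f φ t x| :=
          abs_add_le _ _
      _ ≤ C + t.length * C := add_le_add (hC _) ih
      _ = (a :: t).length * C := by simp; ring

theorem Qword_le_sum [PseudoMetricSpace X] (f : ι → X → X) (φ : X → ℝ) (w : List ι)
    (ε : ℝ) {E : Finset X} (hE : IsSpanningSet f w ε E) :
    Qword f φ w ε ≤ ∑ x ∈ E, Real.exp (birkhoff f φ w x) := by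
  refine csInf_le ⟨0, ?_⟩ ⟨E, hE, rfl⟩
  rintro s ⟨E', -, rfl⟩
  exact Finset.sum_nonneg fun x _ => (Real.exp_pos _).le

theorem exp_le_Qword [PseudoMetricSpace X] [Nonempty X] (f : ι → X → X) {φ : X → ℝ} {C : ℝ}
    (hC : ∀ x, |φ x| ≤ C) (w : List ι) (ε : ℝ)
    (hne : ∃ E : Finset X, IsSpanningSet f w ε E) :
    Real.exp (-(w.length * C)) ≤ Qword f φ w ε := by
  obtain ⟨E₀, hE₀⟩ := hne
  refine le_csInf ⟨_, E₀, hE₀, rfl⟩ ?_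
  rintro s ⟨E, hE, rfl⟩
  obtain ⟨y, hy⟩ := spanningSet_nonempty hE
  calc Real.exp (-(w.length * C)) ≤ Real.exp (birkhoff f φ w y) := by
        apply Real.exp_le_exp.2
        have := (abs_le.1 (birkhoff_abs_le f hC w y)).1
        linarith
    _ ≤ ∑ x ∈ E, Real.exp (birkhoff f φ w x) :=
        Finset.single_le_sum (fun x _ => (Real.exp_pos _).le) hy

theorem Qword_pos [PseudoMetricSpace X] [Nonempty X] (f : ι → X → X) {φ : X → ℝ} {C : ℝ}
    (hC : ∀ x, |φ x| ≤ C) (w : List ι) (ε : ℝ)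
    (hne : ∃ E : Finset X, IsSpanningSet f w ε E) :
    0 < Qword f φ w ε :=
  lt_of_lt_of_le (Real.exp_pos _) (exp_le_Qword f hC w ε hne)

theorem Qword_antitone [PseudoMetricSpace X] (f : ι → X → X) (φ : X → ℝ) (w : List ι)
    {ε₁ ε₂ : ℝ} (h : ε₁ ≤ ε₂) (hne : ∃ E : Finset X, IsSpanningSet f w ε₁ E) :
    Qword f φ w ε₂ ≤ Qword f φ w ε₁ := by
  obtain ⟨E₀, hE₀⟩ := hne
  apply csInf_le_csInf
  · exact ⟨0, by rintro s ⟨E', -, rfl⟩; exact Finset.sum_nonneg fun x _ => (Real.exp_pos _).le⟩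
  · exact ⟨_, E₀, hE₀, rfl⟩
  · rintro s ⟨E, hE, rfl⟩
    exact ⟨E, fun x => by obtain ⟨y, hy, hxy⟩ := hE x; exact ⟨y, hy, hxy.trans_le h⟩, rfl⟩

theorem sum_image_le' {α β : Type*} [DecidableEq β] (s : Finset α) (f : α → β) (g : β → ℝ)
    (hg : ∀ b, 0 ≤ g b) : ∑ b ∈ s.image f, g b ≤ ∑ a ∈ s, g (f a) := by
  classical
  induction s using Finset.induction with
  | empty => simp
  | @insert a s ha ih =>
    rw [Finset.image_insert, Finset.sum_insert ha]
    by_cases hfa : f a ∈ s.image f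
    · rw [Finset.insert_eq_self.2 hfa]
      linarith [hg (f a)]
    · rw [Finset.sum_insert hfa]
      linarith

theorem sum_biUnion_le' {α β : Type*} [DecidableEq β] (s : Finset α) (t : α → Finset β)
    (g : β → ℝ) (hg : ∀ b, 0 ≤ g b) :
    ∑ b ∈ s.biUnion t, g b ≤ ∑ a ∈ s, ∑ b ∈ t a, g b := by
  classical
  induction s using Finset.induction with
  | empty => simp
  | @insert a s ha ih =>
    rw [Finset.biUnion_insert, Finset.sum_insert ha]
    have h1 : ∑ b ∈ t a ∪ s.biUnion t, g b + ∑ b ∈ t a ∩ s.biUnion t, g b =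
        ∑ b ∈ t a, g b + ∑ b ∈ s.biUnion t, g b := Finset.sum_union_inter
    have h2 : 0 ≤ ∑ b ∈ t a ∩ s.biUnion t, g b := Finset.sum_nonneg fun b _ => hg b
    linarith

end Aux1

section Aux2

variable {m : ℕ}

theorem sigma_dist_eq (ω ω' : SigmaSpace m) : dist ω ω' = sdist m ω ω' := rfl

theorem sdist_lt_pow_iff {ω ω' : SigmaSpace m} {K : ℕ} :
    sdist m ω ω' < (1 / 2 : ℝ) ^ K ↔ ∀ n : ℤ, n.natAbs ≤ K → ω n = ω' n := by
  by_cases h : ω = ω'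
  · subst h
    constructor
    · intro _ n _; rfl
    · intro _; rw [sdist_self]; positivity
  · rw [sdist, if_neg h]
    have hSne : {k : ℕ | ∃ n : ℤ, n.natAbs = k ∧ ω n ≠ ω' n}.Nonempty := by
      rcases Function.ne_iff.mp h with ⟨n, hn⟩
      exact ⟨n.natAbs, n, rfl, hn⟩
    rw [pow_lt_pow_iff_right_of_lt_one₀ (by norm_num) (by norm_num)]
    constructor
    · intro hK n hn
      by_contra hne
      have hmem : n.natAbs ∈ {k : ℕ | ∃ n' : ℤ, n'.natAbs = k ∧ ω n' ≠ ω' n'} := ⟨n, rfl, hne⟩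
      have := Nat.sInf_le hmem
      omega
    · intro hagree
      by_contra hK
      push_neg at hK
      obtain ⟨n, hn, hne⟩ := Nat.sInf_mem hSne
      exact hne (hagree n (by omega))

theorem sdist_le_of_agree {ω ω' : SigmaSpace m} {K : ℕ}
    (h : ∀ n : ℤ, n.natAbs ≤ K → ω n = ω' n) : sdist m ω ω' ≤ (1 / 2 : ℝ) ^ (K + 1) := by
  by_cases heq : ω = ω'
  · rw [heq, sdist_self]; positivity
  · rw [sdist, if_neg heq]
    have hSne : {k : ℕ | ∃ n : ℤ, n.natAbs = k ∧ ω n ≠ ω' n}.Nonempty := by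
      rcases Function.ne_iff.mp heq with ⟨n, hn⟩
      exact ⟨n.natAbs, n, rfl, hn⟩
    apply pow_le_pow_of_le_one (by norm_num) (by norm_num)
    by_contra hlt
    push_neg at hlt
    obtain ⟨n, hn, hne⟩ := Nat.sInf_mem hSne
    exact hne (h n (by omega))

theorem pow_succ_lt_pow (K : ℕ) : (1 / 2 : ℝ) ^ (K + 1) < (1 / 2 : ℝ) ^ K := by
  have h0 : (0 : ℝ) < (1 / 2 : ℝ) ^ K := by positivity
  rw [pow_succ]
  linarith

theorem shift_iterate (j : ℕ) (ω : SigmaSpace m) (i : ℤ) :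
    (shift m)^[j] ω i = ω (i + j) := by
  induction j generalizing ω with
  | zero => simp
  | succ j ih =>
    rw [Function.iterate_succ_apply, ih]
    show ω (i + ↑j + 1) = ω (i + ↑(j + 1))
    congr 1
    push_cast
    ring

/-- The word `[ω_{n-1},…,ω_1,ω_0]`. -/
def prefixWord (n : ℕ) (ω : SigmaSpace m) : List (Fin m) :=
  match n with
  | 0 => []
  | k + 1 => ω k :: prefixWord k ω

theorem prefixWord_succ (n : ℕ) (ω : SigmaSpace m) :
    prefixWord (n + 1) ω = ω n :: prefixWord n ω := rfl

theorem prefixWord_length (n : ℕ) (ω : SigmaSpace m) : (prefixWord n ω).length = n := by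
  induction n with
  | zero => rfl
  | succ k ih => rw [prefixWord_succ]; simp [ih]

theorem prefixWord_eq_ofFn (n : ℕ) (ω : SigmaSpace m) :
    prefixWord n ω = List.ofFn (fun i : Fin n => ω ((n : ℤ) - 1 - (i : ℕ))) := by
  induction n with
  | zero => rfl
  | succ k ih =>
    rw [List.ofFn_succ, prefixWord_succ]
    congr 1
    · congr 1
      simp
    · rw [ih]
      congr 1
      funext i
      congr 1
      push_cast [Fin.val_succ]
      ring

theorem prefixWord_congr {n : ℕ} {ω ω' : SigmaSpace m}
    (h : ∀ j : ℤ, 0 ≤ j → j < (n : ℤ) → ω j = ω' j) : prefixWord n ω = prefixWord n ω' := by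
  rw [prefixWord_eq_ofFn, prefixWord_eq_ofFn]
  congr 1
  funext i
  have hi : (i : ℕ) < n := i.isLt
  exact h _ (by omega) (by omega)

theorem suffix_prefixWord_iff {n : ℕ} {ω : SigmaSpace m} {s : List (Fin m)} :
    s <:+ prefixWord n ω ↔ ∃ j, j ≤ n ∧ s = prefixWord j ω := by
  induction n with
  | zero =>
    constructor
    · intro h
      rw [List.suffix_nil.1 h]
      exact ⟨0, le_refl 0, rfl⟩
    · rintro ⟨j, hj, rfl⟩
      interval_cases j
      exact List.suffix_rfl
  | succ k ih =>
    rw [prefixWord_succ, List.suffix_cons_iff, ih]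
    constructor
    · rintro (rfl | ⟨j, hj, rfl⟩)
      · exact ⟨k + 1, le_rfl, rfl⟩
      · exact ⟨j, by omega, rfl⟩
    · rintro ⟨j, hj, rfl⟩
      rcases Nat.eq_or_lt_of_le hj with rfl | hlt
      · left; rfl
      · right; exact ⟨j, by omega, rfl⟩

end Aux2

section Aux3

variable {X : Type*} [MetricSpace X] {m : ℕ} (f : Fin m → X → X)

theorem wordMap_skew (l : List (Fin 1)) (ω : SigmaSpace m) (x : X) :
    wordMap (fun _ : Fin 1 => fun p : SigmaSpace m × X => (shift m p.1, f (p.1 0) p.2)) l (ω, x) =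
      ((shift m)^[l.length] ω, wordMap f (prefixWord l.length ω) x) := by
  induction l with
  | nil => rfl
  | cons a t ih =>
    rw [wordMap_cons, ih]
    show (shift m ((shift m)^[t.length] ω), f (((shift m)^[t.length] ω) 0) _) = _
    refine Prod.ext ?_ ?_
    · show shift m ((shift m)^[t.length] ω) = (shift m)^[t.length + 1] ω
      rw [Function.iterate_succ_apply' (shift m)]
    · show f (((shift m)^[t.length] ω) 0) (wordMap f (prefixWord t.length ω) x) = _
      rw [shift_iterate]
      show _ = wordMap f (prefixWord (t.length + 1) ω) x
      rw [prefixWord_succ, wordMap_cons]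
      congr 2
      omega

theorem birkhoff_skew (φ : X → ℝ) (c : ℝ) (l : List (Fin 1)) (ω : SigmaSpace m) (x : X) :
    birkhoff (fun _ : Fin 1 => fun p : SigmaSpace m × X => (shift m p.1, f (p.1 0) p.2))
        (fun p => c + φ p.2) l (ω, x) =
      l.length * c + birkhoff f φ (prefixWord l.length ω) x := by
  induction l with
  | nil => simp [birkhoff_nil, prefixWord]
  | cons a t ih =>
    rw [birkhoff_cons, ih, wordMap_skew]
    simp only [List.length_cons, prefixWord_succ, birkhoff_cons]
    push_cast
    ring

theorem bowen_skew_of {K : ℕ} (l : List (Fin 1)) (ω ω' : SigmaSpace m) (x x' : X)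
    (hagree : ∀ t : ℤ, -(K : ℤ) ≤ t → t ≤ (l.length : ℤ) + K → ω t = ω' t)
    (hX : bowenDist f (prefixWord l.length ω) x x' < (1 / 2 : ℝ) ^ K) :
    bowenDist (fun _ : Fin 1 => fun p : SigmaSpace m × X => (shift m p.1, f (p.1 0) p.2)) l
      (ω, x) (ω', x') < (1 / 2 : ℝ) ^ K := by
  rw [bowenDist_lt_iff _ (by positivity)]
  intro s hs
  have hj : s.length ≤ l.length := hs.length_le
  rw [wordMap_skew, wordMap_skew, Prod.dist_eq]
  apply max_lt
  · calc dist ((shift m)^[s.length] ω) ((shift m)^[s.length] ω')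
        = sdist m ((shift m)^[s.length] ω) ((shift m)^[s.length] ω') := rfl
      _ ≤ (1 / 2 : ℝ) ^ (K + 1) := by
          apply sdist_le_of_agree
          intro i hi
          rw [shift_iterate, shift_iterate]
          exact hagree (i + s.length) (by omega) (by omega)
      _ < (1 / 2 : ℝ) ^ K := pow_succ_lt_pow K
  · have hpw : prefixWord s.length ω' = prefixWord s.length ω :=
      prefixWord_congr fun j h1 h2 => (hagree j (by omega) (by omega)).symm
    rw [hpw]
    calc dist (wordMap f (prefixWord s.length ω) x) (wordMap f (prefixWord s.length ω) x')
        ≤ bowenDist f (prefixWord l.length ω) x x' :=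
          dist_le_bowenDist f (suffix_prefixWord_iff.2 ⟨s.length, hj, rfl⟩) x x'
      _ < _ := hX

theorem bowen_skew_to {K : ℕ} {ε : ℝ} (hε : 0 < ε) (hεK : ε ≤ (1 / 2 : ℝ) ^ K)
    (l : List (Fin 1)) (ω ω' : SigmaSpace m) (x x' : X)
    (h : bowenDist (fun _ : Fin 1 => fun p : SigmaSpace m × X => (shift m p.1, f (p.1 0) p.2)) l
      (ω, x) (ω', x') < ε) :
    (∀ t : ℤ, -(K : ℤ) ≤ t → t ≤ (l.length : ℤ) + K → ω t = ω' t) ∧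
      bowenDist f (prefixWord l.length ω) x x' < ε := by
  rw [bowenDist_lt_iff _ hε] at h
  have key : ∀ j : ℕ, j ≤ l.length →
      sdist m ((shift m)^[j] ω) ((shift m)^[j] ω') < ε ∧
      dist (wordMap f (prefixWord j ω) x) (wordMap f (prefixWord j ω') x') < ε := by
    intro j hj
    have hs : l.drop (l.length - j) <:+ l := List.drop_suffix _ _
    have hlen : (l.drop (l.length - j)).length = j := by rw [List.length_drop]; omega
    have h2 := h _ hs
    rw [wordMap_skew, wordMap_skew, Prod.dist_eq, max_lt_iff, hlen] at h2
    exact h2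
  have hcoords : ∀ t : ℤ, -(K : ℤ) ≤ t → t ≤ (l.length : ℤ) + K → ω t = ω' t := by
    intro t ht1 ht2
    set j : ℕ := min l.length (max 0 t).toNat with hjdef
    have hjle : j ≤ l.length := min_le_left _ _
    have h1 := (key j hjle).1
    have h2 := sdist_lt_pow_iff.1 (h1.trans_le hεK) (t - j) (by omega)
    rw [shift_iterate, shift_iterate] at h2
    have ht : t - (j : ℤ) + j = t := by ring
    rwa [ht] at h2
  refine ⟨hcoords, ?_⟩
  rw [bowenDist_lt_iff _ hε]
  intro s hs
  obtain ⟨j, hj, rfl⟩ := suffix_prefixWord_iff.1 hs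
  have h2 := (key j hj).2
  rwa [show prefixWord j ω' = prefixWord j ω from
    prefixWord_congr fun t ha hb => (hcoords t (by omega) (by omega)).symm] at h2

end Aux3

section Aux4

variable {X : Type*} [MetricSpace X] {m : ℕ}

/-- Extension of an `n`-word (with window data) to a two-sided sequence. -/
def wext (hm : 0 < m) (n K : ℕ) (u : Fin n → Fin m) (v : Fin (2 * K + 1) → Fin m) :
    SigmaSpace m := fun i =>
  if h : 0 ≤ i ∧ i < (n : ℤ) then u ⟨i.toNat, by omega⟩
  else if h' : -(K : ℤ) ≤ i ∧ i ≤ (n : ℤ) + K then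
    (if h2 : i < 0 then v ⟨(i + K).toNat, by omega⟩ else v ⟨(i - n + K).toNat, by omega⟩)
  else ⟨0, hm⟩

theorem wext_middle (hm : 0 < m) {n : ℕ} (K : ℕ) (u : Fin n → Fin m)
    (v : Fin (2 * K + 1) → Fin m) {j : ℤ} (h0 : 0 ≤ j) (hn : j < (n : ℤ)) :
    wext hm n K u v j = u ⟨j.toNat, by omega⟩ := by
  rw [wext, dif_pos ⟨h0, hn⟩]

theorem prefixWord_wext (hm : 0 < m) {n : ℕ} (K : ℕ) (u : Fin n → Fin m)
    (v : Fin (2 * K + 1) → Fin m) :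
    prefixWord n (wext hm n K u v) = List.ofFn (fun i : Fin n => u (Fin.rev i)) := by
  rw [prefixWord_eq_ofFn]
  congr 1
  funext i
  have hi : (i : ℕ) < n := i.isLt
  rw [wext_middle hm K u v (by omega) (by omega)]
  refine congrArg u (Fin.ext ?_)
  simp [Fin.rev]
  omega

theorem sum_ofFn_rev {n : ℕ} (g : List (Fin m) → ℝ) :
    ∑ u : Fin n → Fin m, g (List.ofFn fun i => u (Fin.rev i)) =
      ∑ w : Fin n → Fin m, g (List.ofFn w) := by
  have hinv : Function.Involutive fun (u : Fin n → Fin m) => u ∘ Fin.rev := fun u => by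
    funext i; simp [Function.comp, Fin.rev_rev]
  exact Fintype.sum_bijective _ hinv.bijective _ _ fun u => rfl

theorem sum_Qword_eq (f : Fin m → X → X) (φ : X → ℝ) (n : ℕ) (ε : ℝ) (hm : 0 < m) :
    ∑ w : Fin n → Fin m, Qword f φ (List.ofFn w) ε = (m : ℝ) ^ n * Qn f φ n ε := by
  rw [Qn, Fintype.card_fin]
  have : ((m : ℝ)) ^ n ≠ 0 := by positivity
  field_simp

theorem Qn_single {Y : Type*} [PseudoMetricSpace Y] (F : Y → Y) (g : Y → ℝ) (n : ℕ) (ε : ℝ) :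
    Qn (fun _ : Fin 1 => F) g n ε =
      Qword (fun _ : Fin 1 => F) g (List.replicate n 0) ε := by
  rw [Qn]
  rw [Fintype.sum_subsingleton (fun w : Fin n → Fin 1 => Qword (fun _ : Fin 1 => F) g
    (List.ofFn w) ε) (fun _ => 0)]
  simp [List.ofFn_const]

theorem skew_spanning_aux (hm : 0 < m) (f : Fin m → X → X) (n K : ℕ)
    (Eu : (Fin n → Fin m) → Finset X)
    (hEu : ∀ u v, IsSpanningSet f (prefixWord n (wext hm n K u v)) ((1 / 2 : ℝ) ^ K) (Eu u)) :
    ∃ E : Finset (SigmaSpace m × X),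
      IsSpanningSet (fun _ : Fin 1 => fun p : SigmaSpace m × X => (shift m p.1, f (p.1 0) p.2))
        (List.replicate n 0) ((1 / 2 : ℝ) ^ K) E ∧
      ∀ g' : SigmaSpace m × X → ℝ, (∀ p, 0 ≤ g' p) →
        ∑ p ∈ E, g' p ≤ ∑ uv : (Fin n → Fin m) × (Fin (2 * K + 1) → Fin m),
          ∑ y ∈ Eu uv.1, g' (wext hm n K uv.1 uv.2, y) := by
  classical
  refine ⟨Finset.biUnion Finset.univ
    (fun uv : (Fin n → Fin m) × (Fin (2 * K + 1) → Fin m) =>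
      (Eu uv.1).image fun y => (wext hm n K uv.1 uv.2, y)), ?_, ?_⟩
  · rintro ⟨ω, x⟩
    set u : Fin n → Fin m := fun j => ω ((j : ℕ) : ℤ) with hu
    set v : Fin (2 * K + 1) → Fin m := fun s =>
      if (s : ℕ) < K then ω (((s : ℕ) : ℤ) - K) else ω (((s : ℕ) : ℤ) - K + n) with hv
    have hkey : ∀ t : ℤ, -(K : ℤ) ≤ t → t ≤ (n : ℤ) + K → wext hm n K u v t = ω t := by
      intro t ht1 ht2
      rw [wext]
      split_ifs with h1 h2 h3
      · show ω (((t.toNat : ℕ) : ℤ)) = ω t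
        congr 1
        omega
      · show v ⟨(t + K).toNat, _⟩ = ω t
        rw [hv]
        have hlt : (((t + K).toNat : ℕ)) < K := by omega
        simp only
        rw [if_pos hlt]
        congr 1
        omega
      · show v ⟨(t - n + K).toNat, _⟩ = ω t
        rw [hv]
        have hlt : ¬ (((t - n + K).toNat : ℕ)) < K := by omega
        simp only
        rw [if_neg hlt]
        congr 1
        omega
      · exact (h2 ⟨ht1, ht2⟩).elim
    obtain ⟨y, hy, hxy⟩ := hEu u v x
    refine ⟨(wext hm n K u v, y), Finset.mem_biUnion.2
      ⟨(u, v), Finset.mem_univ _, Finset.mem_image_of_mem _ hy⟩, ?_⟩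
    have hlen : (List.replicate n (0 : Fin 1)).length = n := by simp
    apply bowen_skew_of f (List.replicate n 0) ω (wext hm n K u v) x y
    · intro t ht1 ht2
      rw [hlen] at ht2
      exact (hkey t ht1 ht2).symm
    · rw [hlen]
      rw [show prefixWord n ω = prefixWord n (wext hm n K u v) from
        prefixWord_congr fun j hj1 hj2 => (hkey j (by omega) (by omega)).symm]
      exact hxy
  · intro g' hg'
    refine (sum_biUnion_le' _ _ _ hg').trans ?_
    apply Finset.sum_le_sum
    intro uv _
    exact sum_image_le' _ _ _ hg'

theorem skew_LB [CompactSpace X] [Nonempty X] (hm : 0 < m) (f : Fin m → X → X)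
    (hf : ∀ i, Continuous (f i)) (φ : X → ℝ) (c : ℝ) (n K : ℕ) :
    Real.exp (n * c) * ∑ w : Fin n → Fin m, Qword f φ (List.ofFn w) ((1 / 2 : ℝ) ^ K)
      ≤ Qword (fun _ : Fin 1 => fun p : SigmaSpace m × X => (shift m p.1, f (p.1 0) p.2))
          (fun p => c + φ p.2) (List.replicate n 0) ((1 / 2 : ℝ) ^ K) := by
  classical
  have hε : (0 : ℝ) < (1 / 2 : ℝ) ^ K := by positivity
  set v0 : Fin (2 * K + 1) → Fin m := fun _ => ⟨0, hm⟩ with hv0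
  have hEx : ∀ u : Fin n → Fin m, ∃ E : Finset X,
      IsSpanningSet f (List.ofFn fun i => u (Fin.rev i)) ((1 / 2 : ℝ) ^ K) E :=
    fun u => exists_spanningSet hf _ hε
  choose Eu hEu using hEx
  obtain ⟨E₀, hE₀, -⟩ := skew_spanning_aux hm f n K Eu
    (fun u v => by rw [prefixWord_wext]; exact hEu u)
  refine le_csInf ⟨_, E₀, hE₀, rfl⟩ ?_
  rintro s ⟨E, hE, rfl⟩
  rw [show (∑ w : Fin n → Fin m, Qword f φ (List.ofFn w) ((1 / 2 : ℝ) ^ K)) =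
    ∑ u : Fin n → Fin m, Qword f φ (prefixWord n (wext hm n K u v0)) ((1 / 2 : ℝ) ^ K) by
      rw [← sum_ofFn_rev fun L => Qword f φ L ((1 / 2 : ℝ) ^ K)]
      exact Finset.sum_congr rfl fun u _ => by rw [prefixWord_wext]]
  rw [← Finset.sum_fiberwise E (fun p : SigmaSpace m × X => fun j : Fin n => p.1 ((j : ℕ) : ℤ))
    (fun p => Real.exp (birkhoff (fun _ : Fin 1 =>
      fun p : SigmaSpace m × X => (shift m p.1, f (p.1 0) p.2)) (fun p => c + φ p.2)
      (List.replicate n 0) p))]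
  rw [Finset.mul_sum]
  apply Finset.sum_le_sum
  intro u _
  set W := prefixWord n (wext hm n K u v0) with hW
  set Fib := E.filter fun p : SigmaSpace m × X => (fun j : Fin n => p.1 ((j : ℕ) : ℤ)) = u
    with hFib
  have hlen : (List.replicate n (0 : Fin 1)).length = n := by simp
  have hspan : IsSpanningSet f W ((1 / 2 : ℝ) ^ K) (Fib.image Prod.snd) := by
    intro x
    obtain ⟨q, hq, hq2⟩ := hE (wext hm n K u v0, x)
    obtain ⟨hag, hbd⟩ := bowen_skew_to f hε le_rfl (List.replicate n 0) _ _ _ _ hq2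
    rw [hlen] at hag hbd
    have hqfib : (fun j : Fin n => q.1 ((j : ℕ) : ℤ)) = u := by
      funext j
      have hj := (hag ((j : ℕ) : ℤ) (by omega) (by have := j.isLt; omega)).symm
      rw [hj, wext_middle hm K u v0 (by omega) (by exact_mod_cast j.isLt)]
      exact congrArg u (Fin.ext (by simp))
    refine ⟨q.2, Finset.mem_image_of_mem _ (Finset.mem_filter.2 ⟨hq, hqfib⟩), ?_⟩
    rwa [hW]
  calc Real.exp (n * c) * Qword f φ W ((1 / 2 : ℝ) ^ K)
      ≤ Real.exp (n * c) * ∑ y ∈ Fib.image Prod.snd, Real.exp (birkhoff f φ W y) := by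
        have := Qword_le_sum f φ W ((1 / 2 : ℝ) ^ K) hspan
        nlinarith [Real.exp_pos (n * c), this, Qword_le_sum f φ W ((1 / 2 : ℝ) ^ K) hspan]
    _ ≤ Real.exp (n * c) * ∑ p ∈ Fib, Real.exp (birkhoff f φ W p.2) := by
        have := sum_image_le' Fib Prod.snd (fun y => Real.exp (birkhoff f φ W y))
          (fun _ => (Real.exp_pos _).le)
        have h2 : (0:ℝ) < Real.exp (n * c) := Real.exp_pos _
        nlinarith
    _ = ∑ p ∈ Fib, Real.exp (birkhoff (fun _ : Fin 1 =>
          fun p : SigmaSpace m × X => (shift m p.1, f (p.1 0) p.2)) (fun p => c + φ p.2)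
          (List.replicate n 0) p) := by
        rw [Finset.mul_sum]
        apply Finset.sum_congr rfl
        rintro ⟨ω, x⟩ hp
        have hpu : (fun j : Fin n => ω ((j : ℕ) : ℤ)) = u := (Finset.mem_filter.1 hp).2
        have hpw : prefixWord n ω = W := by
          rw [hW]
          apply prefixWord_congr
          intro j hj1 hj2
          rw [wext_middle hm K u v0 hj1 hj2, ← hpu]
          simp only
          congr 1
          omega
        rw [birkhoff_skew f φ c (List.replicate n 0) ω x, hlen, hpw, ← Real.exp_add]

theorem skew_UB [CompactSpace X] (hm : 0 < m) (f : Fin m → X → X)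
    (hf : ∀ i, Continuous (f i)) (φ : X → ℝ) (c : ℝ) (n K : ℕ) :
    Qword (fun _ : Fin 1 => fun p : SigmaSpace m × X => (shift m p.1, f (p.1 0) p.2))
        (fun p => c + φ p.2) (List.replicate n 0) ((1 / 2 : ℝ) ^ K)
      ≤ Real.exp (n * c) * ((m : ℝ) ^ (2 * K + 1) *
          ∑ w : Fin n → Fin m, Qword f φ (List.ofFn w) ((1 / 2 : ℝ) ^ K)) := by
  classical
  have hε : (0 : ℝ) < (1 / 2 : ℝ) ^ K := by positivity
  apply le_of_forall_pos_le_add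
  intro δ hδ
  have hden : (0 : ℝ) < Real.exp (n * c) * (m : ℝ) ^ (2 * K + 1) * (m : ℝ) ^ n := by
    have : (0 : ℝ) < (m : ℝ) := by exact_mod_cast hm
    positivity
  set δ' : ℝ := δ / (Real.exp (n * c) * (m : ℝ) ^ (2 * K + 1) * (m : ℝ) ^ n) with hδ'def
  have hδ' : 0 < δ' := div_pos hδ hden
  have hEx : ∀ u : Fin n → Fin m, ∃ E : Finset X,
      IsSpanningSet f (List.ofFn fun i => u (Fin.rev i)) ((1 / 2 : ℝ) ^ K) E ∧
      ∑ y ∈ E, Real.exp (birkhoff f φ (List.ofFn fun i => u (Fin.rev i)) y) ≤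
        Qword f φ (List.ofFn fun i => u (Fin.rev i)) ((1 / 2 : ℝ) ^ K) + δ' := by
    intro u
    have hne : {s : ℝ | ∃ E : Finset X,
        IsSpanningSet f (List.ofFn fun i => u (Fin.rev i)) ((1 / 2 : ℝ) ^ K) E ∧
        s = ∑ y ∈ E, Real.exp (birkhoff f φ (List.ofFn fun i => u (Fin.rev i)) y)}.Nonempty := by
      obtain ⟨E, hE⟩ := exists_spanningSet hf (List.ofFn fun i => u (Fin.rev i)) hε
      exact ⟨_, E, hE, rfl⟩
    obtain ⟨s, ⟨E, hE, rfl⟩, hs⟩ := Real.lt_sInf_add_pos hne hδ'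
    exact ⟨E, hE, hs.le⟩
  choose Eu hEu1 hEu2 using hEx
  obtain ⟨E, hEspan, hEsum⟩ := skew_spanning_aux hm f n K Eu
    (fun u v => by rw [prefixWord_wext]; exact hEu1 u)
  have hlen : (List.replicate n (0 : Fin 1)).length = n := by simp
  have h1 := Qword_le_sum (fun _ : Fin 1 =>
    fun p : SigmaSpace m × X => (shift m p.1, f (p.1 0) p.2)) (fun p => c + φ p.2)
    (List.replicate n 0) ((1 / 2 : ℝ) ^ K) hEspan
  have h2 := hEsum (fun p => Real.exp (birkhoff (fun _ : Fin 1 =>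
    fun p : SigmaSpace m × X => (shift m p.1, f (p.1 0) p.2)) (fun p => c + φ p.2)
    (List.replicate n 0) p)) (fun p => (Real.exp_pos _).le)
  have h3 : ∀ uv : (Fin n → Fin m) × (Fin (2 * K + 1) → Fin m),
      ∑ y ∈ Eu uv.1, Real.exp (birkhoff (fun _ : Fin 1 =>
        fun p : SigmaSpace m × X => (shift m p.1, f (p.1 0) p.2)) (fun p => c + φ p.2)
        (List.replicate n 0) (wext hm n K uv.1 uv.2, y))
      ≤ Real.exp (n * c) *
          (Qword f φ (List.ofFn fun i => uv.1 (Fin.rev i)) ((1 / 2 : ℝ) ^ K) + δ') := by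
    intro uv
    have heq : ∀ y : X, birkhoff (fun _ : Fin 1 =>
        fun p : SigmaSpace m × X => (shift m p.1, f (p.1 0) p.2)) (fun p => c + φ p.2)
        (List.replicate n 0) (wext hm n K uv.1 uv.2, y)
        = n * c + birkhoff f φ (List.ofFn fun i => uv.1 (Fin.rev i)) y := by
      intro y
      rw [birkhoff_skew f φ c (List.replicate n 0) _ y, hlen, prefixWord_wext]
    calc ∑ y ∈ Eu uv.1, Real.exp (birkhoff (fun _ : Fin 1 =>
          fun p : SigmaSpace m × X => (shift m p.1, f (p.1 0) p.2)) (fun p => c + φ p.2)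
          (List.replicate n 0) (wext hm n K uv.1 uv.2, y))
        = Real.exp (n * c) * ∑ y ∈ Eu uv.1,
            Real.exp (birkhoff f φ (List.ofFn fun i => uv.1 (Fin.rev i)) y) := by
          rw [Finset.mul_sum]
          exact Finset.sum_congr rfl fun y _ => by rw [heq y, Real.exp_add]
      _ ≤ _ := by
          have := hEu2 uv.1
          have h2 : (0:ℝ) < Real.exp (n * c) := Real.exp_pos _
          nlinarith
  have h4 : ∑ uv : (Fin n → Fin m) × (Fin (2 * K + 1) → Fin m),
      Real.exp (n * c) *
        (Qword f φ (List.ofFn fun i => uv.1 (Fin.rev i)) ((1 / 2 : ℝ) ^ K) + δ')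
      = Real.exp (n * c) * ((m : ℝ) ^ (2 * K + 1) *
          ∑ w : Fin n → Fin m, Qword f φ (List.ofFn w) ((1 / 2 : ℝ) ^ K)) + δ := by
    rw [Fintype.sum_prod_type]
    have hcard : (Fintype.card (Fin (2 * K + 1) → Fin m) : ℝ) = (m : ℝ) ^ (2 * K + 1) := by
      rw [Fintype.card_fun]
      simp
    have hcardn : (Fintype.card (Fin n → Fin m) : ℝ) = (m : ℝ) ^ n := by
      rw [Fintype.card_fun]
      simp
    have hsum : ∑ u : Fin n → Fin m,
        Qword f φ (List.ofFn fun i => u (Fin.rev i)) ((1 / 2 : ℝ) ^ K)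
        = ∑ w : Fin n → Fin m, Qword f φ (List.ofFn w) ((1 / 2 : ℝ) ^ K) :=
      sum_ofFn_rev fun L => Qword f φ L ((1 / 2 : ℝ) ^ K)
    simp only [Finset.sum_const, Finset.card_univ, nsmul_eq_mul, mul_add,
      Finset.sum_add_distrib, ← Finset.mul_sum]
    rw [hcard, hcardn, hsum, hδ'def]
    field_simp
  calc Qword (fun _ : Fin 1 => fun p : SigmaSpace m × X => (shift m p.1, f (p.1 0) p.2))
        (fun p => c + φ p.2) (List.replicate n 0) ((1 / 2 : ℝ) ^ K)
      ≤ ∑ uv : (Fin n → Fin m) × (Fin (2 * K + 1) → Fin m),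
          ∑ y ∈ Eu uv.1, Real.exp (birkhoff (fun _ : Fin 1 =>
            fun p : SigmaSpace m × X => (shift m p.1, f (p.1 0) p.2)) (fun p => c + φ p.2)
            (List.replicate n 0) (wext hm n K uv.1 uv.2, y)) := h1.trans h2
    _ ≤ ∑ uv : (Fin n → Fin m) × (Fin (2 * K + 1) → Fin m),
          Real.exp (n * c) *
            (Qword f φ (List.ofFn fun i => uv.1 (Fin.rev i)) ((1 / 2 : ℝ) ^ K) + δ') :=
        Finset.sum_le_sum fun uv _ => h3 uv
    _ = _ := h4

end Aux4

section Aux5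

open Filter

theorem limsup_le_const_add {x a : ℕ → ℝ} {R D : ℝ}
    (h : ∀ n : ℕ, 1 ≤ n → x n ≤ R + D / n + a n) :
    Filter.limsup (fun n => ((x n : ℝ) : EReal)) atTop ≤
      (R : EReal) + Filter.limsup (fun n => ((a n : ℝ) : EReal)) atTop := by
  set u : ℕ → EReal := fun n => ((R + D / n : ℝ) : EReal) with hu
  set v : ℕ → EReal := fun n => ((a n : ℝ) : EReal) with hv
  have hulim : Filter.limsup u atTop = (R : EReal) := by
    apply Filter.Tendsto.limsup_eq
    rw [hu]
    rw [EReal.tendsto_coe]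
    have h0 : Filter.Tendsto (fun n : ℕ => D / n) atTop (nhds 0) :=
      tendsto_const_div_atTop_nhds_zero_nat D
    simpa using h0.const_add R
  have hle : (fun n => ((x n : ℝ) : EReal)) ≤ᶠ[atTop] (u + v) := by
    filter_upwards [Filter.eventually_ge_atTop 1] with n hn
    show ((x n : ℝ) : EReal) ≤ ((R + D / n : ℝ) : EReal) + ((a n : ℝ) : EReal)
    rw [← EReal.coe_add]
    exact EReal.coe_le_coe_iff.2 (h n hn)
  have h1 : Filter.limsup (fun n => ((x n : ℝ) : EReal)) atTop ≤
      Filter.limsup (u + v) atTop := Filter.limsup_le_limsup hle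
  refine h1.trans ?_
  have h2 := EReal.limsup_add_le (u := u) (v := v) (f := atTop)
    (Or.inl (by rw [hulim]; exact EReal.coe_ne_bot R))
    (Or.inl (by rw [hulim]; exact EReal.coe_ne_top R))
  rwa [hulim] at h2

theorem const_add_limsup_le {x a : ℕ → ℝ} {R : ℝ}
    (h : ∀ n : ℕ, 1 ≤ n → R + a n ≤ x n) :
    (R : EReal) + Filter.limsup (fun n => ((a n : ℝ) : EReal)) atTop ≤
      Filter.limsup (fun n => ((x n : ℝ) : EReal)) atTop := by
  set v : ℕ → EReal := fun n => ((a n : ℝ) : EReal) with hv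
  have h0 := EReal.le_limsup_add (u := v) (v := fun _ : ℕ => (R : EReal)) (f := atTop)
  rw [Filter.liminf_const] at h0
  have hle : (v + fun _ : ℕ => (R : EReal)) ≤ᶠ[atTop] (fun n => ((x n : ℝ) : EReal)) := by
    filter_upwards [Filter.eventually_ge_atTop 1] with n hn
    show ((a n : ℝ) : EReal) + (R : EReal) ≤ ((x n : ℝ) : EReal)
    rw [← EReal.coe_add]
    exact EReal.coe_le_coe_iff.2 (by linarith [h n hn])
  have h1 : Filter.limsup (v + fun _ : ℕ => (R : EReal)) atTop ≤
      Filter.limsup (fun n => ((x n : ℝ) : EReal)) atTop := Filter.limsup_le_limsup hle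
  calc (R : EReal) + Filter.limsup v atTop = Filter.limsup v atTop + (R : EReal) := add_comm _ _
    _ ≤ Filter.limsup (v + fun _ : ℕ => (R : EReal)) atTop := h0
    _ ≤ _ := h1

theorem iSup_pos_eq_iSup_pow {L : ℝ → EReal}
    (hmono : ∀ ⦃ε₁ ε₂ : ℝ⦄, 0 < ε₁ → ε₁ ≤ ε₂ → L ε₂ ≤ L ε₁) :
    (⨆ (ε : ℝ) (_ : 0 < ε), L ε) = ⨆ K : ℕ, L ((1 / 2 : ℝ) ^ K) := by
  apply le_antisymm
  · refine iSup₂_le fun ε hε => ?_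
    obtain ⟨K, hK⟩ := exists_pow_lt_of_lt_one hε (by norm_num : (1 / 2 : ℝ) < 1)
    exact (hmono (by positivity) hK.le).trans (le_iSup (fun K : ℕ => L ((1 / 2 : ℝ) ^ K)) K)
  · refine iSup_le fun K => ?_
    have hp : (0 : ℝ) < (1 / 2 : ℝ) ^ K := by positivity
    exact le_iSup₂ (f := fun (ε : ℝ) (_ : 0 < ε) => L ε) ((1 / 2 : ℝ) ^ K) hp

theorem coe_add_iSup (r : ℝ) (s : ℕ → EReal) :
    (r : EReal) + ⨆ K, s K = ⨆ K, ((r : EReal) + s K) := by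
  apply le_antisymm
  · refine EReal.add_le_of_forall_lt fun a ha b hb => ?_
    obtain ⟨K, hK⟩ := lt_iSup_iff.1 hb
    exact le_trans (add_le_add ha.le hK.le) (le_iSup (fun K => (r : EReal) + s K) K)
  · exact iSup_le fun K => add_le_add le_rfl (le_iSup s K)

end Aux5

/-- For the skew product `F(ω,x) = (σω, f_{ω₀}(x))` on `Σ_m × X` and
`g(ω,x) = c + φ(x)`, the classical topological pressure (realized as the pressure of the
free semigroup action with the single generator `F`) satisfies
`P(F,g) = c + log m + P(f₀,…,f_{m-1},φ)`. -/
theorem stmt_0 {X : Type*} [MetricSpace X] [CompactSpace X] [Nonempty X]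
    {m : ℕ} (hm : 0 < m)
    (f : Fin m → X → X) (hf : ∀ i, Continuous (f i))
    (φ : X → ℝ) (hφ : Continuous φ) (c : ℝ)
    (F : SigmaSpace m × X → SigmaSpace m × X)
    (hF : F = fun p => (shift m p.1, f (p.1 0) p.2))
    (g : SigmaSpace m × X → ℝ) (hg : g = fun p => c + φ p.2) :
    pressure (fun _ : Fin 1 => F) g =
      (c : EReal) + (Real.log (m : ℝ) : EReal) + pressure f φ := by
  subst hF hg
  classical
  have hm1 : (1 : ℝ) ≤ (m : ℝ) := by exact_mod_cast hm
  have hmpos : (0 : ℝ) < (m : ℝ) := by exact_mod_cast hm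
  have hFm : Nonempty (Fin m) := ⟨⟨0, hm⟩⟩
  have hSm : Nonempty (SigmaSpace m) := ⟨fun _ => ⟨0, hm⟩⟩
  obtain ⟨C, hC0⟩ := IsCompact.exists_bound_of_continuousOn (isCompact_univ (X := X))
    hφ.continuousOn
  have hC : ∀ x : X, |φ x| ≤ C := fun x => by
    have := hC0 x (Set.mem_univ x)
    rwa [Real.norm_eq_abs] at this
  have hgC : ∀ p : SigmaSpace m × X, |c + φ p.2| ≤ |c| + C :=
    fun p => (abs_add_le _ _).trans (by have := hC p.2; linarith)
  set R : ℝ := c + Real.log m with hR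
  have hSkewSpan : ∀ (n : ℕ) {ε : ℝ}, 0 < ε →
      ∃ E : Finset (SigmaSpace m × X), IsSpanningSet
        (fun _ : Fin 1 => fun p : SigmaSpace m × X => (shift m p.1, f (p.1 0) p.2))
        (List.replicate n 0) ε E := by
    intro n ε hε
    obtain ⟨K, hK⟩ := exists_pow_lt_of_lt_one hε (by norm_num : (1 / 2 : ℝ) < 1)
    have hεK : (0 : ℝ) < (1 / 2 : ℝ) ^ K := by positivity
    choose Eu hEu using fun u : Fin n → Fin m =>
      exists_spanningSet hf (List.ofFn fun i => u (Fin.rev i)) hεK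
    obtain ⟨E, hE, -⟩ := skew_spanning_aux hm f n K Eu
      (fun u v => by rw [prefixWord_wext]; exact hEu u)
    refine ⟨E, fun p => ?_⟩
    obtain ⟨q, hq, hpq⟩ := hE p
    exact ⟨q, hq, hpq.trans hK⟩
  have hQnf_pos : ∀ (n : ℕ) {ε : ℝ}, 0 < ε → 0 < Qn f φ n ε := by
    intro n ε hε
    rw [Qn, Fintype.card_fin]
    refine mul_pos (by positivity) (Finset.sum_pos (fun w _ => Qword_pos f hC _ _
      (exists_spanningSet hf _ hε)) Finset.univ_nonempty)
  have hQnF_pos : ∀ (n : ℕ) {ε : ℝ}, 0 < ε → 0 < Qn (fun _ : Fin 1 =>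
      fun p : SigmaSpace m × X => (shift m p.1, f (p.1 0) p.2)) (fun p => c + φ p.2) n ε := by
    intro n ε hε
    rw [Qn_single]
    exact Qword_pos _ hgC _ _ (hSkewSpan n hε)
  have hAanti : ∀ ⦃ε₁ ε₂ : ℝ⦄, 0 < ε₁ → ε₁ ≤ ε₂ →
      Filter.limsup (fun n : ℕ => ((Real.log (Qn f φ n ε₂) / n : ℝ) : EReal)) atTop ≤
      Filter.limsup (fun n : ℕ => ((Real.log (Qn f φ n ε₁) / n : ℝ) : EReal)) atTop := by
    intro ε₁ ε₂ hε₁ h12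
    have key : ∀ n : ℕ, Real.log (Qn f φ n ε₂) / n ≤ Real.log (Qn f φ n ε₁) / n := by
      intro n
      have hq : Qn f φ n ε₂ ≤ Qn f φ n ε₁ := by
        rw [Qn, Qn, Fintype.card_fin]
        refine mul_le_mul_of_nonneg_left (Finset.sum_le_sum fun w _ =>
          Qword_antitone f φ _ h12 (exists_spanningSet hf _ hε₁)) (by positivity)
      have hlog := Real.log_le_log (hQnf_pos n (hε₁.trans_le h12)) hq
      rw [div_eq_mul_inv, div_eq_mul_inv]
      exact mul_le_mul_of_nonneg_right hlog (by positivity)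
    exact Filter.limsup_le_limsup (Filter.Eventually.of_forall fun n =>
      EReal.coe_le_coe_iff.2 (key n))
  have hXanti : ∀ ⦃ε₁ ε₂ : ℝ⦄, 0 < ε₁ → ε₁ ≤ ε₂ →
      Filter.limsup (fun n : ℕ => ((Real.log (Qn (fun _ : Fin 1 =>
        fun p : SigmaSpace m × X => (shift m p.1, f (p.1 0) p.2)) (fun p => c + φ p.2) n ε₂)
        / n : ℝ) : EReal)) atTop ≤
      Filter.limsup (fun n : ℕ => ((Real.log (Qn (fun _ : Fin 1 =>
        fun p : SigmaSpace m × X => (shift m p.1, f (p.1 0) p.2)) (fun p => c + φ p.2) n ε₁)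
        / n : ℝ) : EReal)) atTop := by
    intro ε₁ ε₂ hε₁ h12
    have key : ∀ n : ℕ, Real.log (Qn (fun _ : Fin 1 =>
        fun p : SigmaSpace m × X => (shift m p.1, f (p.1 0) p.2)) (fun p => c + φ p.2) n ε₂)
        / n ≤ Real.log (Qn (fun _ : Fin 1 =>
        fun p : SigmaSpace m × X => (shift m p.1, f (p.1 0) p.2)) (fun p => c + φ p.2) n ε₁)
        / n := by
      intro n
      have hq : Qn (fun _ : Fin 1 =>
          fun p : SigmaSpace m × X => (shift m p.1, f (p.1 0) p.2)) (fun p => c + φ p.2) n ε₂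
          ≤ Qn (fun _ : Fin 1 =>
          fun p : SigmaSpace m × X => (shift m p.1, f (p.1 0) p.2)) (fun p => c + φ p.2) n ε₁ := by
        rw [Qn_single, Qn_single]
        exact Qword_antitone _ _ _ h12 (hSkewSpan n hε₁)
      have hlog := Real.log_le_log (hQnF_pos n (hε₁.trans_le h12)) hq
      rw [div_eq_mul_inv, div_eq_mul_inv]
      exact mul_le_mul_of_nonneg_right hlog (by positivity)
    exact Filter.limsup_le_limsup (Filter.Eventually.of_forall fun n =>
      EReal.coe_le_coe_iff.2 (key n))
  have perK : ∀ K : ℕ,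
      Filter.limsup (fun n : ℕ => ((Real.log (Qn (fun _ : Fin 1 =>
        fun p : SigmaSpace m × X => (shift m p.1, f (p.1 0) p.2)) (fun p => c + φ p.2) n
        ((1 / 2 : ℝ) ^ K)) / n : ℝ) : EReal)) atTop
      = (R : EReal) + Filter.limsup (fun n : ℕ =>
          ((Real.log (Qn f φ n ((1 / 2 : ℝ) ^ K)) / n : ℝ) : EReal)) atTop := by
    intro K
    have hε : (0 : ℝ) < (1 / 2 : ℝ) ^ K := by positivity
    set D : ℝ := (2 * K + 1 : ℕ) * Real.log m with hD
    have hD0 : 0 ≤ D := mul_nonneg (by positivity) (Real.log_nonneg hm1)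
    have keyLB : ∀ n : ℕ, 1 ≤ n →
        R + Real.log (Qn f φ n ((1 / 2 : ℝ) ^ K)) / n ≤
        Real.log (Qn (fun _ : Fin 1 => fun p : SigmaSpace m × X =>
          (shift m p.1, f (p.1 0) p.2)) (fun p => c + φ p.2) n ((1 / 2 : ℝ) ^ K)) / n := by
      intro n hn
      have hnR : (0 : ℝ) < (n : ℝ) := by exact_mod_cast hn
      have hQf := hQnf_pos n hε
      have hlb := skew_LB hm f hf φ c n K
      rw [sum_Qword_eq f φ n ((1 / 2 : ℝ) ^ K) hm, ← Qn_single] at hlb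
      have hlog := Real.log_le_log (by positivity) hlb
      rw [Real.log_mul (Real.exp_ne_zero _) (by positivity), Real.log_exp,
        Real.log_mul (by positivity) hQf.ne', Real.log_pow] at hlog
      have h2 : ((n : ℝ) * c + ((n : ℝ) * Real.log m +
          Real.log (Qn f φ n ((1 / 2 : ℝ) ^ K)))) / n ≤
          Real.log (Qn (fun _ : Fin 1 => fun p : SigmaSpace m × X =>
            (shift m p.1, f (p.1 0) p.2)) (fun p => c + φ p.2) n ((1 / 2 : ℝ) ^ K)) / n := by
        rw [div_eq_mul_inv, div_eq_mul_inv]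
        exact mul_le_mul_of_nonneg_right hlog (by positivity)
      have h3 : ((n : ℝ) * c + ((n : ℝ) * Real.log m +
          Real.log (Qn f φ n ((1 / 2 : ℝ) ^ K)))) / n =
          R + Real.log (Qn f φ n ((1 / 2 : ℝ) ^ K)) / n := by
        rw [hR]
        field_simp
        ring
      linarith
    have keyUB : ∀ n : ℕ, 1 ≤ n →
        Real.log (Qn (fun _ : Fin 1 => fun p : SigmaSpace m × X =>
          (shift m p.1, f (p.1 0) p.2)) (fun p => c + φ p.2) n ((1 / 2 : ℝ) ^ K)) / n ≤
        R + D / n + Real.log (Qn f φ n ((1 / 2 : ℝ) ^ K)) / n := by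
      intro n hn
      have hnR : (0 : ℝ) < (n : ℝ) := by exact_mod_cast hn
      have hQf := hQnf_pos n hε
      have hQF := hQnF_pos n hε
      have hub := skew_UB hm f hf φ c n K
      rw [sum_Qword_eq f φ n ((1 / 2 : ℝ) ^ K) hm, ← Qn_single] at hub
      have hlog := Real.log_le_log hQF hub
      rw [Real.log_mul (Real.exp_ne_zero _) (by positivity), Real.log_exp,
        Real.log_mul (by positivity) (by positivity), Real.log_pow,
        Real.log_mul (by positivity) hQf.ne', Real.log_pow] at hlog
      have h2 : Real.log (Qn (fun _ : Fin 1 => fun p : SigmaSpace m × X =>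
            (shift m p.1, f (p.1 0) p.2)) (fun p => c + φ p.2) n ((1 / 2 : ℝ) ^ K)) / n ≤
          ((n : ℝ) * c + (((2 * K + 1 : ℕ) : ℝ) * Real.log m + ((n : ℝ) * Real.log m +
            Real.log (Qn f φ n ((1 / 2 : ℝ) ^ K))))) / n := by
        rw [div_eq_mul_inv, div_eq_mul_inv]
        exact mul_le_mul_of_nonneg_right hlog (by positivity)
      have h3 : ((n : ℝ) * c + (((2 * K + 1 : ℕ) : ℝ) * Real.log m + ((n : ℝ) * Real.log m +
            Real.log (Qn f φ n ((1 / 2 : ℝ) ^ K))))) / n =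
          R + D / n + Real.log (Qn f φ n ((1 / 2 : ℝ) ^ K)) / n := by
        rw [hR, hD]
        field_simp
        ring
      linarith
    exact le_antisymm (limsup_le_const_add keyUB) (const_add_limsup_le keyLB)
  refine Eq.trans (iSup_pos_eq_iSup_pow hXanti) ?_
  refine Eq.trans (iSup_congr perK) ?_
  refine Eq.trans (coe_add_iSup R _).symm ?_
  rw [show (⨆ K : ℕ, Filter.limsup (fun n : ℕ =>
      ((Real.log (Qn f φ n ((1 / 2 : ℝ) ^ K)) / n : ℝ) : EReal)) atTop) = pressure f φ from
    (iSup_pos_eq_iSup_pow hAanti).symm]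
  rw [hR, EReal.coe_add]

end FSA
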